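/- A connected cubic cyclic Haar graph H(m, x, y) with m ≥ 5 is a circulant if and only if m is odd and {x,y} = {a, 2a} or {x,y} = {a, −a} for some a ∈ ℤ_m with gcd(m, a) = 1. -/

import Mathlib

/-- The cyclic Haar graph H(m,x,y): vertex set ℤ_m × Bool, with (i, false)
adjacent to (i+s, true) for s ∈ {0, x, y}. -/
def Haar (m : ℕ) (x y : ZMod m) : SimpleGraph (ZMod m × Bool) :=
  SimpleGraph.fromRel (fun p q =>
    p.2 = false ∧ q.2 = true ∧ (q.1 = p.1 ∨ q.1 = p.1 + x ∨ q.1 = p.1 + y))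

lemma haar_adj {m : ℕ} (x y : ZMod m) (i : ZMod m) (q : ZMod m × Bool) :
    (Haar m x y).Adj (i, false) q ↔
      q = (i, true) ∨ q = (i + x, true) ∨ q = (i + y, true) := by
  obtain ⟨j, b⟩ := q
  cases b
  · simp [Haar, SimpleGraph.fromRel_adj, Prod.ext_iff]
  · constructor
    · rintro ⟨-, ⟨-, -, h⟩ | ⟨h, -⟩⟩
      · rcases h with h | h | h <;> simp_all [Prod.ext_iff]
      · simp at h
    · rintro (h | h | h) <;> injection h with h1 h2 <;>
        exact ⟨by simp, Or.inl ⟨rfl, rfl, by simp [h1]⟩⟩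

lemma haar_adj_ne {m : ℕ} {x y : ZMod m} {p q : ZMod m × Bool}
    (h : (Haar m x y).Adj p q) : p.2 ≠ q.2 := by
  obtain ⟨hne, h | h⟩ := h <;> rw [h.1, h.2.1] <;> simp

lemma isUnit_of_closure {m : ℕ} (a b : ZMod m)
    (hb : b ∈ AddSubgroup.zmultiples a)
    (h : AddSubgroup.closure ({a, b} : Set (ZMod m)) = ⊤) : IsUnit a := by
  have h1 : (1 : ZMod m) ∈ AddSubgroup.zmultiples a := by
    have hle : AddSubgroup.closure ({a, b} : Set (ZMod m)) ≤ AddSubgroup.zmultiples a := by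
      rw [AddSubgroup.closure_le]
      rintro z hz
      simp only [Set.mem_insert_iff, Set.mem_singleton_iff] at hz
      rcases hz with rfl | rfl
      · exact AddSubgroup.mem_zmultiples _
      · exact hb
    exact hle (h ▸ AddSubgroup.mem_top 1)
  obtain ⟨k, hk⟩ := h1
  exact IsUnit.of_mul_eq_one (a := a) (k : ZMod m) (by rw [mul_comm, ← zsmul_eq_mul]; exact hk)

open Equiv

lemma side_pow_nat {V : Type*} (σ : Equiv.Perm (V × Bool))
    (h : ∀ p, (σ p).2 = !p.2) (k : ℕ) (p : V × Bool) :
    ((σ ^ k) p).2 = if Even k then p.2 else !p.2 := by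
  induction k generalizing p with
  | zero => simp
  | succ k ih =>
    rw [pow_succ, Equiv.Perm.mul_apply, ih (σ p), h p]
    by_cases h' : Even k <;> simp [h', Nat.even_add_one, Bool.not_not]

lemma side_inv {V : Type*} (σ : Equiv.Perm (V × Bool))
    (h : ∀ p, (σ p).2 = !p.2) (p : V × Bool) : (σ⁻¹ p).2 = !p.2 := by
  have h2 : p.2 = !((σ⁻¹ p).2) := by
    conv_lhs => rw [← (Equiv.Perm.eq_inv_iff_eq (f := σ) (x := σ⁻¹ p) (y := p)).mp rfl]
    rw [h]
  rw [h2, Bool.not_not]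

lemma side_zpow {V : Type*} (σ : Equiv.Perm (V × Bool))
    (h : ∀ p, (σ p).2 = !p.2) (n : ℤ) (p : V × Bool) :
    ((σ ^ n) p).2 = if Even n then p.2 else !p.2 := by
  cases n with
  | ofNat k =>
    rw [Int.ofNat_eq_coe, zpow_natCast, side_pow_nat σ h k p]
    simp [Int.even_coe_nat]
  | negSucc k =>
    rw [zpow_negSucc, ← inv_pow, side_pow_nat σ⁻¹ (side_inv σ h) (k+1) p]
    have : Even (Int.negSucc k) ↔ Even (k + 1) := by
      rw [Int.negSucc_eq, even_neg]
      exact_mod_cast Int.even_coe_nat (k + 1)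
    by_cases h' : Even (k + 1) <;> simp [h', this.mpr, this]

lemma keep_pow_nat {V : Type*} (σ : Equiv.Perm (V × Bool))
    (h : ∀ p, (σ p).2 = p.2) (k : ℕ) (p : V × Bool) :
    ((σ ^ k) p).2 = p.2 := by
  induction k generalizing p with
  | zero => simp
  | succ k ih => rw [pow_succ, Equiv.Perm.mul_apply, ih (σ p), h p]

lemma keep_zpow {V : Type*} (σ : Equiv.Perm (V × Bool))
    (h : ∀ p, (σ p).2 = p.2) (n : ℤ) (p : V × Bool) :
    ((σ ^ n) p).2 = p.2 := by
  have hinv : ∀ p : V × Bool, (σ⁻¹ p).2 = p.2 := by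
    intro p
    conv_rhs => rw [← (Equiv.Perm.eq_inv_iff_eq (f := σ) (x := σ⁻¹ p) (y := p)).mp rfl]
    rw [h]
  cases n with
  | ofNat k => rw [Int.ofNat_eq_coe, zpow_natCast, keep_pow_nat σ h k p]
  | negSucc k => rw [zpow_negSucc, ← inv_pow, keep_pow_nat σ⁻¹ hinv (k+1) p]

lemma adj_pow_nat {V : Type*} (G : SimpleGraph V) (σ : Equiv.Perm V)
    (h : ∀ p q, G.Adj (σ p) (σ q) ↔ G.Adj p q) (k : ℕ) (p q : V) :
    G.Adj ((σ ^ k) p) ((σ ^ k) q) ↔ G.Adj p q := by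
  induction k generalizing p q with
  | zero => simp
  | succ k ih =>
    rw [pow_succ, Equiv.Perm.mul_apply, Equiv.Perm.mul_apply, ih (σ p) (σ q)]
    exact h p q

lemma adj_zpow {V : Type*} (G : SimpleGraph V) (σ : Equiv.Perm V)
    (h : ∀ p q, G.Adj (σ p) (σ q) ↔ G.Adj p q) (n : ℤ) (p q : V) :
    G.Adj ((σ ^ n) p) ((σ ^ n) q) ↔ G.Adj p q := by
  have hinv : ∀ p q, G.Adj (σ⁻¹ p) (σ⁻¹ q) ↔ G.Adj p q := by
    intro p q
    conv_rhs => rw [← Equiv.apply_symm_apply σ p, ← Equiv.apply_symm_apply σ q]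
    exact (h _ _).symm
  cases n with
  | ofNat k => rw [Int.ofNat_eq_coe, zpow_natCast]; exact adj_pow_nat G σ h k p q
  | negSucc k => rw [zpow_negSucc, ← inv_pow]; exact adj_pow_nat G σ⁻¹ hinv (k+1) p q


set_option maxHeartbeats 1000000 in
lemma aux_bash {m : ℕ} (x y : ZMod m) (hx : x ≠ 0) (hy : y ≠ 0) (hxy : x ≠ y)
    (htf : ∀ z : ZMod m, 2 * z = 0 → z = 0)
    (s1 s1' s2 s2' : ZMod m)
    (h1 : s1 = 0 ∨ s1 = x ∨ s1 = y)
    (h1' : s1' = 0 ∨ s1' = x ∨ s1' = y)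
    (h2 : s2 = 0 ∨ s2 = x ∨ s2 = y)
    (h2' : s2' = 0 ∨ s2' = x ∨ s2' = y)
    (heq : s1 - s1' = s2 - s2')
    (hne0 : s1 - s1' ≠ 0)
    (hne : s1 ≠ s2) :
    y = 2 * x ∨ x = 2 * y ∨ y = -x := by
  rcases h1 with rfl | rfl | rfl <;> rcases h1' with rfl | rfl | rfl <;>
    rcases h2 with rfl | rfl | rfl <;> rcases h2' with rfl | rfl | rfl <;>
      first
        | (exact absurd rfl hne)
        | (exact absurd (sub_self _) hne0)
        | (exact absurd (by linear_combination heq) hx)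
        | (exact absurd (by linear_combination -heq) hx)
        | (exact absurd (by linear_combination heq) hy)
        | (exact absurd (by linear_combination -heq) hy)
        | (exact absurd (by linear_combination heq) hxy)
        | (exact absurd (by linear_combination -heq) hxy)
        | (exact absurd (htf _ (by linear_combination heq)) hx)
        | (exact absurd (htf _ (by linear_combination -heq)) hx)
        | (exact absurd (htf _ (by linear_combination heq)) hy)
        | (exact absurd (htf _ (by linear_combination -heq)) hy)
        | (exact absurd (sub_eq_zero.mp (htf _ (by linear_combination heq))) hxy)
        | (exact absurd (sub_eq_zero.mp (htf _ (by linear_combination -heq))) hxy)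
        | (exact Or.inl (by linear_combination heq))
        | (exact Or.inl (by linear_combination -heq))
        | (exact Or.inr (Or.inl (by linear_combination heq)))
        | (exact Or.inr (Or.inl (by linear_combination -heq)))
        | (exact Or.inr (Or.inr (by linear_combination heq)))
        | (exact Or.inr (Or.inr (by linear_combination -heq)))

lemma haar_preconnected {m : ℕ} (x y : ZMod m)
    (hconn : AddSubgroup.closure ({x, y} : Set (ZMod m)) = ⊤) :
    (Haar m x y).Preconnected := by
  have key : ∀ z : ZMod m, ∀ i : ZMod m,
      (Haar m x y).Reachable (i, false) (i + z, false) := by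
    intro z
    have hz : z ∈ AddSubgroup.closure ({x, y} : Set (ZMod m)) := by
      rw [hconn]; trivial
    induction hz using AddSubgroup.closure_induction with
    | mem z hz =>
      intro i
      simp only [Set.mem_insert_iff, Set.mem_singleton_iff] at hz
      rcases hz with rfl | rfl
      · have h1 : (Haar m z y).Adj (i, false) (i + z, true) :=
          (haar_adj _ _ i _).2 (Or.inr (Or.inl rfl))
        have h2 : (Haar m z y).Adj (i + z, false) (i + z, true) :=
          (haar_adj _ _ (i + z) _).2 (Or.inl rfl)
        exact h1.reachable.trans h2.reachable.symm
      · have h1 : (Haar m x z).Adj (i, false) (i + z, true) :=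
          (haar_adj _ _ i _).2 (Or.inr (Or.inr rfl))
        have h2 : (Haar m x z).Adj (i + z, false) (i + z, true) :=
          (haar_adj _ _ (i + z) _).2 (Or.inl rfl)
        exact h1.reachable.trans h2.reachable.symm
    | zero => intro i; rw [add_zero]
    | add z w hz hw ihz ihw =>
      intro i
      have := (ihz i).trans (ihw (i + z))
      rwa [add_assoc] at this
    | neg z hz ih =>
      intro i
      have := (ih (i + -z)).symm
      rwa [add_assoc, neg_add_cancel, add_zero] at this
  have to0 : ∀ v : ZMod m × Bool, (Haar m x y).Reachable v ((0 : ZMod m), false) := by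
    rintro ⟨j, b⟩
    have hb : (Haar m x y).Reachable (j, false) ((0 : ZMod m), false) := by
      have := key (-j) j
      rwa [add_neg_cancel] at this
    cases b
    · exact hb
    · have hadj : (Haar m x y).Adj (j, false) (j, true) := (haar_adj x y j _).2 (Or.inl rfl)
      exact hadj.reachable.symm.trans hb
  intro u v
  exact (to0 u).trans (to0 v).symm


theorem stmt_9_fwd (m : ℕ) (hm : 5 ≤ m) (x y : ZMod m)
    (hx : x ≠ 0) (hy : y ≠ 0) (hxy : x ≠ y)
    (hconn : AddSubgroup.closure ({x, y} : Set (ZMod m)) = ⊤)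
    (σ : Equiv.Perm (ZMod m × Bool))
    (h1 : ∀ p q : ZMod m × Bool, (Haar m x y).Adj (σ p) (σ q) ↔ (Haar m x y).Adj p q)
    (h2 : ∀ p q : ZMod m × Bool, q ∈ MulAction.orbit (Subgroup.zpowers σ) p)
    (h3 : ∀ p : ZMod m × Bool,
      Nat.card (MulAction.orbit (Subgroup.zpowers σ) p) = orderOf σ) :
    Odd m ∧ ∃ a : ZMod m, IsUnit a ∧
      (({x, y} : Set (ZMod m)) = {a, 2 * a} ∨ ({x, y} : Set (ZMod m)) = {a, -a}) := by
  haveI : NeZero m := ⟨by omega⟩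
  set v₀ : ZMod m × Bool := ((0 : ZMod m), false) with hv₀
  -- transitivity
  have htrans : ∀ p q : ZMod m × Bool, ∃ n : ℤ, (σ ^ n) p = q := by
    intro p q
    obtain ⟨⟨g, hg⟩, hgp⟩ := h2 p q
    obtain ⟨n, rfl⟩ := hg
    exact ⟨n, hgp⟩
  -- triviality of point stabilizers
  have hstab : ∀ n : ℤ, (σ ^ n) v₀ = v₀ → σ ^ n = 1 := by
    intro n hn
    ext p : 1
    obtain ⟨j, hj⟩ := htrans v₀ p
    rw [← hj, Equiv.Perm.one_apply, ← Equiv.Perm.mul_apply, ← zpow_add, add_comm,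
      zpow_add, Equiv.Perm.mul_apply, hn]
  -- the order of σ is 2m
  have hcard : Nat.card (ZMod m × Bool) = 2 * m := by
    rw [Nat.card_prod, Nat.card_zmod, Nat.card_eq_fintype_card, Fintype.card_bool]
    ring
  have hord : orderOf σ = 2 * m := by
    rw [← h3 v₀, Set.eq_univ_of_forall (fun q => h2 v₀ q),
      Nat.card_congr (Equiv.Set.univ _), hcard]
  -- σ swaps the two sides
  have hPre : (Haar m x y).Preconnected := haar_preconnected x y hconn
  have bool_helper : ∀ a b c d : Bool, a ≠ b → c ≠ d → (c = a ↔ d = b) := by decide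
  have hiff : ∀ p q : ZMod m × Bool, (Haar m x y).Adj p q →
      ((σ p).2 = p.2 ↔ (σ q).2 = q.2) := by
    intro p q h
    exact bool_helper _ _ _ _ (haar_adj_ne h) (haar_adj_ne ((h1 p q).2 h))
  have hreach_iff : ∀ p q : ZMod m × Bool, (Haar m x y).Reachable p q →
      ((σ p).2 = p.2 ↔ (σ q).2 = q.2) := by
    intro p q h
    obtain ⟨w⟩ := h
    induction w with
    | nil => exact Iff.rfl
    | cons h w ih => exact (hiff _ _ h).trans ih
  have hflip : ∀ p : ZMod m × Bool, (σ p).2 = !p.2 := by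
    by_cases hfix : (σ v₀).2 = false
    · exfalso
      have hall : ∀ p : ZMod m × Bool, (σ p).2 = p.2 :=
        fun p => (hreach_iff v₀ p (hPre v₀ p)).1 hfix
      obtain ⟨n, hn⟩ := htrans v₀ ((0 : ZMod m), true)
      have := keep_zpow σ hall n v₀
      rw [hn] at this
      simp [hv₀] at this
    · intro p
      have hnp : ¬(σ p).2 = p.2 := fun h => hfix ((hreach_iff p v₀ (hPre p v₀)).1 h)
      revert hnp
      cases hp : p.2 <;> cases hsp : (σ p).2 <;> intro hnp <;>
        first
          | rfl
          | exact absurd rfl hnp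
  -- power parity facts
  have hodd_of : ∀ (n : ℤ) (u : ZMod m), (σ ^ n) v₀ = (u, true) → Odd n := by
    intro n u hn
    have := side_zpow σ hflip n v₀
    rw [hn] at this
    by_cases he : Even n
    · simp [he, hv₀] at this
    · exact Int.not_even_iff_odd.1 he
  have hm_dvd : ∀ n : ℤ, (σ ^ (2 * n)) v₀ = v₀ → (m : ℤ) ∣ n := by
    intro n hn
    have h2n := hstab _ hn
    have hdvd : ((2 * m : ℕ) : ℤ) ∣ 2 * n := by
      rw [← hord]
      exact orderOf_dvd_iff_zpow_eq_one.2 h2n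
    obtain ⟨k, hk⟩ := hdvd
    refine ⟨k, ?_⟩
    have : (2 : ℤ) * n = 2 * ((m : ℤ) * k) := by push_cast at hk ⊢; linarith
    exact mul_left_cancel₀ (by norm_num) this
  -- helpers for power computations at v₀
  have hee : ∀ a b : ℤ, (σ ^ (-a)) v₀ = (σ ^ b) v₀ → (σ ^ (a + b)) v₀ = v₀ := by
    intro a b h
    calc (σ ^ (a + b)) v₀ = (σ ^ a) ((σ ^ b) v₀) := by
          rw [← Equiv.Perm.mul_apply, ← zpow_add]
      _ = (σ ^ a) ((σ ^ (-a)) v₀) := by rw [h]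
      _ = v₀ := by
          rw [← Equiv.Perm.mul_apply, ← zpow_add, add_neg_cancel, zpow_zero,
            Equiv.Perm.one_apply]
  have hcc : ∀ a b c : ℤ, (σ ^ (a + c)) v₀ = v₀ → (σ ^ (b + c)) v₀ = v₀ →
      (σ ^ a) v₀ = (σ ^ b) v₀ := by
    intro a b c ha hb
    have e1 := hstab _ ha
    have e2 := hstab _ hb
    have e3 : σ ^ (a - b) = 1 := by
      rw [show a - b = (a + c) + -(b + c) by ring, zpow_add, zpow_neg, e1, e2]
      simp
    have e4 : σ ^ a = σ ^ (a - b) * σ ^ b := by rw [← zpow_add, sub_add_cancel]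
    rw [e4, e3, one_mul]
  -- adjacency under powers
  have hAn : ∀ (n : ℤ) (p q : ZMod m × Bool),
      (Haar m x y).Adj ((σ ^ n) p) ((σ ^ n) q) ↔ (Haar m x y).Adj p q :=
    fun n p q => adj_zpow (Haar m x y) σ h1 n p q
  -- the main 4-cycle argument
  have main : ∀ (n nw : ℤ) (uq uw : ZMod m),
      (σ ^ n) v₀ = (uq, true) → (σ ^ nw) v₀ = (uw, true) → uq ≠ uw →
      (σ ^ (2 * n)) v₀ = v₀ →
      (Haar m x y).Adj v₀ (uq, true) → (Haar m x y).Adj v₀ (uw, true) →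
      Odd m ∧ (y = 2 * x ∨ x = 2 * y ∨ y = -x) := by
    intro n nw uq uw hq hw hne h2n hadjq hadjw
    have hn_odd : Odd n := hodd_of n uq hq
    have hnw_odd : Odd nw := hodd_of nw uw hw
    have hmn : (m : ℤ) ∣ n := hm_dvd n h2n
    have hoddm : Odd m := by
      obtain ⟨k, hk⟩ := hmn
      rw [hk] at hn_odd
      exact Int.odd_coe_nat m |>.1 (Int.odd_mul.1 hn_odd).1
    have h2n1 : σ ^ (2 * n) = 1 := hstab _ h2n
    set P : ZMod m × Bool := (σ ^ n) (uw, true) with hP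
    have hPalt : P = (σ ^ (n + nw)) v₀ := by
      rw [hP, ← hw, ← Equiv.Perm.mul_apply, ← zpow_add]
    have hP2 : P.2 = false := by
      rw [hPalt, side_zpow σ hflip (n + nw) v₀]
      have : Even (n + nw) := Odd.add_odd hn_odd hnw_odd
      simp [this, hv₀]
    set A1 : ZMod m := P.1 with hA1
    have hPeq : P = (A1, false) := Prod.ext rfl hP2
    have hA1ne : A1 ≠ 0 := by
      intro h0
      have hPv : P = v₀ := by rw [hPeq, h0]
      have e1 : σ ^ (n + nw) = 1 := hstab _ (by rw [← hPalt]; exact hPv)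
      have e2 : σ ^ nw = σ ^ n := by
        have e3 : σ ^ nw = σ ^ (n + nw) * (σ ^ (2 * n))⁻¹ * σ ^ n := by
          rw [← zpow_neg, ← zpow_add, ← zpow_add]
          congr 1
          ring
        rw [e3, e1, h2n1, one_mul, inv_one, one_mul]
      have hpair : (uq, (true : Bool)) = (uw, true) := by rw [← hq, ← hw, e2]
      exact hne (congrArg Prod.fst hpair)
    have hadj_Pq : (Haar m x y).Adj (A1, false) (uq, true) := by
      have h' := (hAn n v₀ (uw, true)).2 hadjw
      rw [hq, ← hP, hPeq] at h'
      exact h'.symm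
    have hadj_Pw : (Haar m x y).Adj (A1, false) (uw, true) := by
      have h' := (hAn nw v₀ (uq, true)).2 hadjq
      rw [hw] at h'
      have hswap : (σ ^ nw) (uq, true) = P := by
        rw [← hq, ← Equiv.Perm.mul_apply, ← zpow_add, hPalt, add_comm]
      rw [hswap, hPeq] at h'
      exact h'.symm
    have htf : ∀ z : ZMod m, 2 * z = 0 → z = 0 := by
      intro z hz
      have h2u : IsUnit (2 : ZMod m) := by
        have := (ZMod.isUnit_iff_coprime 2 m).2 (Nat.coprime_two_left.2 hoddm)
        simpa using this
      exact (IsUnit.mul_right_eq_zero h2u).1 hz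
    have dq : uq = 0 ∨ uq = x ∨ uq = y := by
      have := (haar_adj x y 0 (uq, true)).1 hadjq
      simpa [Prod.ext_iff, zero_add] using this
    have dw : uw = 0 ∨ uw = x ∨ uw = y := by
      have := (haar_adj x y 0 (uw, true)).1 hadjw
      simpa [Prod.ext_iff, zero_add] using this
    have dq' : uq - A1 = 0 ∨ uq - A1 = x ∨ uq - A1 = y := by
      have := (haar_adj x y A1 (uq, true)).1 hadj_Pq
      simp only [Prod.mk.injEq, and_true] at this
      rcases this with h | h | h
      · left; rw [h]; ring
      · right; left; rw [h]; ring
      · right; right; rw [h]; ring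
    have dw' : uw - A1 = 0 ∨ uw - A1 = x ∨ uw - A1 = y := by
      have := (haar_adj x y A1 (uw, true)).1 hadj_Pw
      simp only [Prod.mk.injEq, and_true] at this
      rcases this with h | h | h
      · left; rw [h]; ring
      · right; left; rw [h]; ring
      · right; right; rw [h]; ring
    refine ⟨hoddm, aux_bash x y hx hy hxy htf uq (uq - A1) uw (uw - A1) dq dq' dw dw'
      (by ring) ?_ hne⟩
    intro h0
    exact hA1ne (by linear_combination h0)
  -- set up the three neighbours
  have hA1' : (Haar m x y).Adj v₀ ((0 : ZMod m), true) := (haar_adj x y 0 _).2 (Or.inl rfl)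
  have hA2' : (Haar m x y).Adj v₀ (x, true) := (haar_adj x y 0 _).2 (Or.inr (Or.inl (by simp)))
  have hA3' : (Haar m x y).Adj v₀ (y, true) := (haar_adj x y 0 _).2 (Or.inr (Or.inr (by simp)))
  obtain ⟨n1, hn1⟩ := htrans v₀ ((0 : ZMod m), true)
  obtain ⟨n2, hn2⟩ := htrans v₀ (x, true)
  obtain ⟨n3, hn3⟩ := htrans v₀ (y, true)
  -- classification of σ^(-n) v₀ for neighbours
  have hclass : ∀ nn : ℤ, (σ ^ nn) v₀ = ((0:ZMod m), true) →
      ((σ ^ (-nn)) v₀ = ((0:ZMod m), true) ∨ (σ ^ (-nn)) v₀ = (x, true) ∨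
        (σ ^ (-nn)) v₀ = (y, true)) → True := fun _ _ _ => trivial
  have hr : ∀ nn : ℤ, ∀ q : ZMod m × Bool, (σ ^ nn) v₀ = q →
      (Haar m x y).Adj v₀ q →
      ((σ ^ (-nn)) v₀ = ((0:ZMod m), true) ∨ (σ ^ (-nn)) v₀ = (x, true) ∨
        (σ ^ (-nn)) v₀ = (y, true)) := by
    intro nn q hq hadj
    have h' := (hAn (-nn) v₀ q).2 hadj
    have hqq : (σ ^ (-nn)) q = v₀ := by
      rw [← hq, ← Equiv.Perm.mul_apply, ← zpow_add, neg_add_cancel, zpow_zero,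
        Equiv.Perm.one_apply]
    rw [hqq] at h'
    have := (haar_adj x y 0 ((σ ^ (-nn)) v₀)).1 h'.symm
    simpa [zero_add] using this
  -- derive the conclusion case analysis
  have hconc : Odd m ∧ (y = 2 * x ∨ x = 2 * y ∨ y = -x) := by
    rcases hr n1 _ hn1 hA1' with hc | hc | hc
    · -- σ^(-n1) v₀ = q1 : fixed point
      have h2n : (σ ^ (2 * n1)) v₀ = v₀ := by
        rw [two_mul]; exact hee n1 n1 (hc.trans hn1.symm)
      exact main n1 n2 0 x hn1 hn2 (fun h => hx h.symm) h2n hA1' hA2'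
    · -- σ^(-n1) v₀ = q2
      have e12 : (σ ^ (n1 + n2)) v₀ = v₀ := hee n1 n2 (hc.trans hn2.symm)
      rcases hr n3 _ hn3 hA3' with hc3 | hc3 | hc3
      · -- σ^(-n3) v₀ = q1 : contradiction q2 = q3
        have e31 : (σ ^ (n3 + n1)) v₀ = v₀ := hee n3 n1 (hc3.trans hn1.symm)
        have : (σ ^ n2) v₀ = (σ ^ n3) v₀ := by
          refine hcc n2 n3 n1 ?_ ?_
          · rw [add_comm]; exact e12
          · exact e31
        rw [hn2, hn3] at this
        exact absurd (congrArg Prod.fst this) hxy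
      · -- σ^(-n3) v₀ = q2 : contradiction q1 = q3
        have e32 : (σ ^ (n3 + n2)) v₀ = v₀ := hee n3 n2 (hc3.trans hn2.symm)
        have : (σ ^ n1) v₀ = (σ ^ n3) v₀ := by
          refine hcc n1 n3 n2 ?_ ?_
          · exact e12
          · exact e32
        rw [hn1, hn3] at this
        exact absurd (congrArg Prod.fst this).symm hy
      · -- fixed point at q3
        have h2n : (σ ^ (2 * n3)) v₀ = v₀ := by
          rw [two_mul]; exact hee n3 n3 (hc3.trans hn3.symm)
        exact main n3 n1 y 0 hn3 hn1 hy h2n hA3' hA1'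
    · -- σ^(-n1) v₀ = q3
      have e13 : (σ ^ (n1 + n3)) v₀ = v₀ := hee n1 n3 (hc.trans hn3.symm)
      rcases hr n2 _ hn2 hA2' with hc2 | hc2 | hc2
      · -- σ^(-n2) v₀ = q1 : contradiction q2 = q3
        have e21 : (σ ^ (n2 + n1)) v₀ = v₀ := hee n2 n1 (hc2.trans hn1.symm)
        have : (σ ^ n2) v₀ = (σ ^ n3) v₀ := by
          refine hcc n2 n3 n1 ?_ ?_
          · exact e21
          · rw [add_comm]; exact e13
        rw [hn2, hn3] at this
        exact absurd (congrArg Prod.fst this) hxy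
      · -- fixed point at q2
        have h2n : (σ ^ (2 * n2)) v₀ = v₀ := by
          rw [two_mul]; exact hee n2 n2 (hc2.trans hn2.symm)
        exact main n2 n1 x 0 hn2 hn1 hx h2n hA2' hA1'
      · -- σ^(-n2) v₀ = q3 : contradiction q1 = q2
        have e23 : (σ ^ (n2 + n3)) v₀ = v₀ := hee n2 n3 (hc2.trans hn3.symm)
        have : (σ ^ n1) v₀ = (σ ^ n2) v₀ := by
          refine hcc n1 n2 n3 ?_ ?_
          · exact e13
          · exact e23
        rw [hn1, hn2] at this
        exact absurd (congrArg Prod.fst this).symm hx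
  obtain ⟨hoddm, hcase⟩ := hconc
  refine ⟨hoddm, ?_⟩
  rcases hcase with h | h | h
  · refine ⟨x, ?_, Or.inl (by rw [h])⟩
    refine isUnit_of_closure x y (AddSubgroup.mem_zmultiples_iff.mpr ⟨(2 : ℤ), ?_⟩) hconn
    rw [zsmul_eq_mul]
    push_cast
    linear_combination -h
  · have hconn' : AddSubgroup.closure ({y, x} : Set (ZMod m)) = ⊤ := by
      rwa [Set.pair_comm]
    refine ⟨y, ?_, Or.inl ?_⟩
    · refine isUnit_of_closure y x (AddSubgroup.mem_zmultiples_iff.mpr ⟨(2 : ℤ), ?_⟩) hconn'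
      rw [zsmul_eq_mul]
      push_cast
      linear_combination -h
    · rw [h, Set.pair_comm]
  · refine ⟨x, ?_, Or.inr (by rw [h])⟩
    refine isUnit_of_closure x y (AddSubgroup.mem_zmultiples_iff.mpr ⟨(-1 : ℤ), ?_⟩) hconn
    rw [zsmul_eq_mul]
    push_cast
    linear_combination -h


theorem stmt_9_bwd (m : ℕ) (hm : 5 ≤ m) (x y : ZMod m)
    (hx : x ≠ 0) (hy : y ≠ 0) (hxy : x ≠ y)
    (hconn : AddSubgroup.closure ({x, y} : Set (ZMod m)) = ⊤)
    (hodd : Odd m) (a : ZMod m) (ha : IsUnit a)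
    (hcase : ({x, y} : Set (ZMod m)) = {a, 2 * a} ∨ ({x, y} : Set (ZMod m)) = {a, -a}) :
    (∃ σ : Equiv.Perm (ZMod m × Bool),
        (∀ p q : ZMod m × Bool, (Haar m x y).Adj (σ p) (σ q) ↔ (Haar m x y).Adj p q) ∧
        (∀ p q : ZMod m × Bool, q ∈ MulAction.orbit (Subgroup.zpowers σ) p) ∧
        (∀ p : ZMod m × Bool,
          Nat.card (MulAction.orbit (Subgroup.zpowers σ) p) = orderOf σ)) := by
  haveI : NeZero m := ⟨by omega⟩
  have h2u : IsUnit (2 : ZMod m) := by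
    have := (ZMod.isUnit_iff_coprime 2 m).2 (Nat.coprime_two_left.2 hodd)
    simpa using this
  -- extract the translation constants
  obtain ⟨cf, ct, Hsum, Hrel⟩ :
      ∃ cf ct : ZMod m, cf + ct = 2 ∧
        ∀ i j : ZMod m,
          (j = i ∨ j = i + x ∨ j = i + y) ↔
            (i + cf = j + ct ∨ i + cf = j + ct + x ∨ i + cf = j + ct + y) := by
    have hmem : ∀ S : Set (ZMod m), ({x, y} : Set (ZMod m)) = S → (x ∈ S ∧ y ∈ S) := by
      rintro S rfl; constructor <;> simp
    rcases hcase with hc | hc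
    · obtain ⟨hxm, hym⟩ := hmem _ hc
      simp only [Set.mem_insert_iff, Set.mem_singleton_iff] at hxm hym
      refine ⟨1 + a, 1 - a, by ring, ?_⟩
      rcases hxm with rfl | rfl <;> rcases hym with rfl | rfl
      · exact absurd rfl hxy
      · intro i j
        constructor <;> rintro (h | h | h) <;>
          first
            | (left; linear_combination h) | (left; linear_combination -h)
            | (right; left; linear_combination h) | (right; left; linear_combination -h)
            | (right; right; linear_combination h) | (right; right; linear_combination -h)
      · intro i j
        constructor <;> rintro (h | h | h) <;>
          first
            | (left; linear_combination h) | (left; linear_combination -h)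
            | (right; left; linear_combination h) | (right; left; linear_combination -h)
            | (right; right; linear_combination h) | (right; right; linear_combination -h)
      · exact absurd rfl hxy
    · obtain ⟨hxm, hym⟩ := hmem _ hc
      simp only [Set.mem_insert_iff, Set.mem_singleton_iff] at hxm hym
      refine ⟨1, 1, by ring, ?_⟩
      rcases hxm with rfl | rfl <;> rcases hym with rfl | rfl
      · exact absurd rfl hxy
      · intro i j
        constructor <;> rintro (h | h | h) <;>
          first
            | (left; linear_combination h) | (left; linear_combination -h)
            | (right; left; linear_combination h) | (right; left; linear_combination -h)
            | (right; right; linear_combination h) | (right; right; linear_combination -h)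
      · intro i j
        constructor <;> rintro (h | h | h) <;>
          first
            | (left; linear_combination h) | (left; linear_combination -h)
            | (right; left; linear_combination h) | (right; left; linear_combination -h)
            | (right; right; linear_combination h) | (right; right; linear_combination -h)
      · exact absurd rfl hxy
  -- build the permutation
  set f : ZMod m × Bool → ZMod m × Bool :=
    fun p => (p.1 + (if p.2 then ct else cf), !p.2) with hf
  set g : ZMod m × Bool → ZMod m × Bool :=
    fun p => (p.1 - (if p.2 then cf else ct), !p.2) with hg
  have hfg : Function.LeftInverse g f := by
    rintro ⟨i, b⟩; cases b <;> simp [hf, hg]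
  have hgf : Function.RightInverse g f := by
    rintro ⟨i, b⟩; cases b <;> simp [hf, hg]
  set σ : Equiv.Perm (ZMod m × Bool) := ⟨f, g, hfg, hgf⟩ with hσ
  have happ : ∀ p : ZMod m × Bool, σ p = (p.1 + (if p.2 then ct else cf), !p.2) :=
    fun p => rfl
  have hflip : ∀ p : ZMod m × Bool, (σ p).2 = !p.2 := fun p => rfl
  -- adjacency preservation
  have hadj : ∀ p q : ZMod m × Bool, (Haar m x y).Adj (σ p) (σ q) ↔ (Haar m x y).Adj p q := by
    have key : ∀ i j : ZMod m,
        ((Haar m x y).Adj (σ (i, false)) (σ (j, true)) ↔ (Haar m x y).Adj (i, false) (j, true)) := by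
      intro i j
      rw [show σ (i, false) = (i + cf, true) from rfl, show σ (j, true) = (j + ct, false) from rfl]
      rw [SimpleGraph.adj_comm, haar_adj, haar_adj]
      simp only [Prod.mk.injEq, and_true]
      exact (Hrel i j).symm
    rintro ⟨i, b⟩ ⟨j, c⟩
    cases b <;> cases c
    · exact iff_of_false (fun h => (haar_adj_ne h) rfl) (fun h => (haar_adj_ne h) rfl)
    · exact key i j
    · rw [SimpleGraph.adj_comm, SimpleGraph.adj_comm (Haar m x y) (i, true) (j, false)]
      exact key j i
    · exact iff_of_false (fun h => (haar_adj_ne h) rfl) (fun h => (haar_adj_ne h) rfl)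
  -- powers of σ
  have hσ2 : ∀ p : ZMod m × Bool, σ (σ p) = (p.1 + 2, p.2) := by
    rintro ⟨i, b⟩
    cases b <;> simp [happ] <;> linear_combination Hsum
  have hpow2 : ∀ (k : ℕ) (p : ZMod m × Bool),
      (σ ^ (2 * k)) p = (p.1 + 2 * (k : ZMod m), p.2) := by
    intro k
    induction k with
    | zero => intro p; simp
    | succ k ih =>
      intro p
      have hstep : (σ ^ (2 * (k + 1))) p = (σ ^ (2 * k)) (σ (σ p)) := by
        rw [show 2 * (k + 1) = 2 * k + 1 + 1 by ring, pow_succ, pow_succ,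
          Equiv.Perm.mul_apply, Equiv.Perm.mul_apply]
      rw [hstep, hσ2, ih]
      refine Prod.ext ?_ rfl
      show p.1 + 2 + 2 * (k : ZMod m) = p.1 + 2 * ((k : ℕ) + 1 : ℕ) 
      push_cast
      ring
  have hsolve : ∀ z : ZMod m, ∃ k : ℕ, 2 * (k : ZMod m) = z := by
    intro z
    obtain ⟨u, hu⟩ := h2u
    refine ⟨((u⁻¹ : (ZMod m)ˣ) * z : ZMod m).val, ?_⟩
    rw [ZMod.natCast_val, ZMod.cast_id]
    calc (2 : ZMod m) * ((u⁻¹ : (ZMod m)ˣ) * z) = ((u : ZMod m) * (u⁻¹ : (ZMod m)ˣ)) * z := by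
          rw [hu]; ring
      _ = z := by rw [Units.mul_inv]; ring
  have hreach : ∀ p q : ZMod m × Bool, ∃ k : ℕ, (σ ^ k) p = q := by
    rintro ⟨i, b⟩ ⟨j, c⟩
    by_cases hbc : b = c
    · subst hbc
      obtain ⟨k, hk⟩ := hsolve (j - i)
      exact ⟨2 * k, by rw [hpow2]; exact Prod.ext (by show i + 2*(k:ZMod m) = j; linear_combination hk) rfl⟩
    · have hc : c = !b := by cases b <;> cases c <;> simp_all
      subst hc
      obtain ⟨k, hk⟩ := hsolve (j - (i + (if b then ct else cf)))
      refine ⟨2 * k + 1, ?_⟩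
      rw [pow_succ, Equiv.Perm.mul_apply, happ, hpow2]
      exact Prod.ext (by show i + _ + 2*(k:ZMod m) = j; linear_combination hk) rfl
  have horb : ∀ p q : ZMod m × Bool, q ∈ MulAction.orbit (Subgroup.zpowers σ) p := by
    intro p q
    obtain ⟨k, hk⟩ := hreach p q
    exact ⟨⟨σ ^ k, ⟨(k : ℤ), zpow_natCast σ k⟩⟩, hk⟩
  refine ⟨σ, hadj, horb, ?_⟩
  -- order of σ
  have hcard : Nat.card (ZMod m × Bool) = 2 * m := by
    rw [Nat.card_prod, Nat.card_zmod, Nat.card_eq_fintype_card, Fintype.card_bool]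
    ring
  have hord : orderOf σ = 2 * m := by
    refine (orderOf_eq_iff (by omega)).2 ⟨?_, ?_⟩
    · ext p : 1
      rw [hpow2 m p]
      simp [ZMod.natCast_self]
    · intro k hklt hkpos h1
      rcases Nat.even_or_odd k with he | ho
      · obtain ⟨r, hr⟩ := he
        have hk2 : k = 2 * r := by omega
        subst hk2
        have h0 := congrArg (fun (e : Equiv.Perm (ZMod m × Bool)) => (e ((0 : ZMod m), false)).1) h1
        simp only [hpow2 r ((0 : ZMod m), false), Equiv.Perm.one_apply, zero_add] at h0
        have this := h0
        have hz : ((2 * r : ℕ) : ZMod m) = 0 := by push_cast; exact this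
        have hdvd : m ∣ 2 * r := (ZMod.natCast_eq_zero_iff _ _).1 hz
        have hdvd' : m ∣ r := by
          refine (Nat.Coprime.dvd_of_dvd_mul_right (Nat.coprime_two_right.2 hodd)) ?_
          rwa [mul_comm] at hdvd
        have : r = 0 ∨ m ≤ r := by
          rcases Nat.eq_zero_or_pos r with h | h
          · exact Or.inl h
          · exact Or.inr (Nat.le_of_dvd h hdvd')
        omega
      · have this := congrArg (fun (e : Equiv.Perm (ZMod m × Bool)) => (e ((0 : ZMod m), false)).2) h1
        simp only [Equiv.Perm.one_apply] at this
        rw [side_pow_nat σ hflip k] at this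
        rw [← Nat.not_even_iff_odd] at ho
        simp [ho] at this
  intro p
  have huniv : MulAction.orbit (Subgroup.zpowers σ) p = Set.univ :=
    Set.eq_univ_of_forall (fun q => horb p q)
  rw [huniv, hord]
  rw [Nat.card_congr (Equiv.Set.univ _)]
  exact hcard


/-- A connected cubic cyclic Haar graph H(m,x,y) with m ≥ 5
(x, y distinct nonzero, {x,y} generating, i.e. gcd(m,x,y)=1) is a circulant
(admits an automorphism acting regularly on the vertices) if and only if
m is odd and {x,y} = {a,2a} or {x,y} = {a,−a} for some unit a of ℤ_m. -/
theorem stmt_9 (m : ℕ) (hm : 5 ≤ m) (x y : ZMod m)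
    (hx : x ≠ 0) (hy : y ≠ 0) (hxy : x ≠ y)
    (hconn : AddSubgroup.closure ({x, y} : Set (ZMod m)) = ⊤) :
    (∃ σ : Equiv.Perm (ZMod m × Bool),
        (∀ p q : ZMod m × Bool, (Haar m x y).Adj (σ p) (σ q) ↔ (Haar m x y).Adj p q) ∧
        (∀ p q : ZMod m × Bool, q ∈ MulAction.orbit (Subgroup.zpowers σ) p) ∧
        (∀ p : ZMod m × Bool,
          Nat.card (MulAction.orbit (Subgroup.zpowers σ) p) = orderOf σ)) ↔
      (Odd m ∧ ∃ a : ZMod m, IsUnit a ∧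
        (({x, y} : Set (ZMod m)) = {a, 2 * a} ∨ ({x, y} : Set (ZMod m)) = {a, -a})) := by
  constructor
  · rintro ⟨σ, hσ1, hσ2, hσ3⟩
    exact stmt_9_fwd m hm x y hx hy hxy hconn σ hσ1 hσ2 hσ3
  · rintro ⟨hodd, a, ha, hcase⟩
    exact stmt_9_bwd m hm x y hx hy hxy hconn hodd a ha hcase
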